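/- Let 0 < α < 1, 0 ≤ p00, p11 ≤ 1 with p00 + p11 ≠ 1, and let α' = α + δ with 0 ≤ α' ≤ 1. Define β' = (1-α')(1-p00) + α'·p11, c11 = α·p11/β and c10 = α·(1-p11)/(1-β) where β = (1-α)(1-p00) + α·p11 ∈ (0,1). Then β'·c11 + (1-β')·c10 = α' - δ·T/(β(1-β)), where T = (1-α)p00(1-p00) + α·p11(1-p11). -/

import Mathlib

/-- Algebraic core of the bias of the calibration estimator under drift:
β'·c11 + (1-β')·c10 = α' - δ·T/(β(1-β)). -/
theorem stmt10 (α δ p00 p11 : ℝ) (hα0 : 0 < α) (hα1 : α < 1)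
    (h00 : 0 ≤ p00) (h00' : p00 ≤ 1) (h11 : 0 ≤ p11) (h11' : p11 ≤ 1)
    (hsum : p00 + p11 ≠ 1)
    (α' : ℝ) (hα' : α' = α + δ) (hα'0 : 0 ≤ α') (hα'1 : α' ≤ 1)
    (β β' c11 c10 T : ℝ)
    (hβ : β = (1 - α) * (1 - p00) + α * p11) (hβ0 : 0 < β) (hβ1 : β < 1)
    (hβ' : β' = (1 - α') * (1 - p00) + α' * p11)
    (hc11 : c11 = α * p11 / β) (hc10 : c10 = α * (1 - p11) / (1 - β))
    (hT : T = (1 - α) * p00 * (1 - p00) + α * p11 * (1 - p11)) :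
    β' * c11 + (1 - β') * c10 = α' - δ * T / (β * (1 - β)) := by
  have hβne : β ≠ 0 := ne_of_gt hβ0
  have h1β : (1 - β) ≠ 0 := by linarith
  subst hα' hβ' hc11 hc10 hT
  field_simp
  subst hβ
  ring
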